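/- arXiv:1704.03540 — 5 statements merged into one kernel-verified Lean document; each statement's English description precedes it below -/
import Mathlib

section
/- For every i ∈ {1, …, p} and every t ∈ ℕ, the global model and the local model satisfy ‖x(t) − x^i(t)‖ ≤ Σ_{k=(t−s)_+}^{t−1} ‖x(k+1) − x(k)‖. -/
open Filter Topology

noncomputable abbrev EE (p : ℕ) (d : Fin p → ℕ) : Type :=
  PiLp 2 (fun i : Fin p => EuclideanSpace ℝ (Fin (d i)))
theorem stmt_0
    (p s : ℕ) (hp : 1 ≤ p) (d : Fin p → ℕ) (hd : ∀ i, 1 ≤ d i)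
    (τ : Fin p → Fin p → ℕ → ℕ)
    (hτ_le : ∀ i j t, τ i j t ≤ t)
    (hτ_ge : ∀ i j t, t ≤ τ i j t + s)
    (hτ_self : ∀ i t, τ i i t = t)
    (x : (i : Fin p) → ℕ → EuclideanSpace ℝ (Fin (d i)))
    (X : ℕ → EE p d) (hX : ∀ t i, X t i = x i t)
    (Xl : Fin p → ℕ → EE p d) (hXl : ∀ i t j, Xl i t j = x j (τ i j t))
    :
    ∀ (i : Fin p) (t : ℕ),
      ‖X t - Xl i t‖ ≤ ∑ k ∈ Finset.Ico (t - s) t, ‖X (k + 1) - X k‖ := by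
  intro i t
  set v : ℕ → EE p d :=
    fun k => WithLp.toLp 2 (fun j => if τ i j t ≤ k then x j (k + 1) - x j k else 0) with hv
  have hXv : X t - Xl i t = ∑ k ∈ Finset.Ico (t - s) t, v k := by
    refine PiLp.ext fun j => ?_
    have hsum : (∑ k ∈ Finset.Ico (t - s) t, v k) j
        = ∑ k ∈ Finset.Ico (t - s) t, v k j := by
      rw [WithLp.ofLp_sum]; exact Finset.sum_apply j _ _
    have hfilt : Finset.filter (fun k => τ i j t ≤ k) (Finset.Ico (t - s) t)
        = Finset.Ico (τ i j t) t := by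
      ext k
      simp only [Finset.mem_filter, Finset.mem_Ico]
      have h1 := hτ_le i j t
      have h2 := hτ_ge i j t
      omega
    have htel : (∑ k ∈ Finset.Ico (τ i j t) t, (x j (k + 1) - x j k))
        = x j t - x j (τ i j t) := by
      rw [Finset.sum_Ico_eq_sub _ (hτ_le i j t),
        Finset.sum_range_sub (fun n => x j n), Finset.sum_range_sub (fun n => x j n)]
      abel
    calc (X t - Xl i t) j = x j t - x j (τ i j t) := by
          rw [PiLp.sub_apply, hX, hXl]
      _ = ∑ k ∈ Finset.Ico (τ i j t) t, (x j (k + 1) - x j k) := htel.symm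
      _ = ∑ k ∈ Finset.Ico (t - s) t, v k j := by
          rw [← hfilt, Finset.sum_filter]
      _ = (∑ k ∈ Finset.Ico (t - s) t, v k) j := hsum.symm
  rw [hXv]
  refine (norm_sum_le _ _).trans (Finset.sum_le_sum fun k _ => ?_)
  have h2 : (0:ℝ) < (2 : ENNReal).toReal := by norm_num
  rw [PiLp.norm_eq_sum (by norm_num : (0:ℝ) < (2 : ENNReal).toReal),
    PiLp.norm_eq_sum (by norm_num : (0:ℝ) < (2 : ENNReal).toReal)]
  gcongr with j hj
  simp only [hv, WithLp.ofLp_toLp]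
  split_ifs with h
  · rw [PiLp.sub_apply, hX, hX]
  · rw [norm_zero]
    exact norm_nonneg _
end

section
/- If the step size satisfies 0 < η < 1/(L(1 + 2√p·s)), then the global sequence generated by m-PAPG has square-summable successive differences: Σ_{t=0}^{∞} ‖x(t+1) − x(t)‖^2 < ∞. -/
open Filter Topology InnerProductSpace intervalIntegral

section Helpers

lemma descent_lemma {E : Type*} [NormedAddCommGroup E] [InnerProductSpace ℝ E] [CompleteSpace E]
    (f : E → ℝ) (f' : E → E) (hf : ∀ y, HasGradientAt f (f' y) y)
    (L : ℝ) (hL : 0 ≤ L) (hlip : ∀ y z, ‖f' y - f' z‖ ≤ L * ‖y - z‖) (a b : E) :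
    f b ≤ f a + ⟪f' a, b - a⟫_ℝ + L / 2 * ‖b - a‖ ^ 2 := by
  set v := b - a with hv
  have hcont : Continuous f' := by
    have : LipschitzWith (Real.toNNReal L) f' := by
      apply LipschitzWith.of_dist_le_mul
      intro y z
      rw [dist_eq_norm, dist_eq_norm]
      simpa [Real.coe_toNNReal L hL] using hlip y z
    exact this.continuous
  set h' : ℝ → ℝ := fun t => ⟪f' (a + t • v), v⟫_ℝ with hh'
  have hderiv : ∀ t : ℝ, HasDerivAt (fun u : ℝ => f (a + u • v)) (h' t) t := by
    intro t
    have h1 : HasDerivAt (fun u : ℝ => a + u • v) v t := by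
      simpa using ((hasDerivAt_id t).smul_const v).const_add a
    have h2 := ((hf (a + t • v)).hasFDerivAt).comp_hasDerivAt t h1
    simpa [hh', InnerProductSpace.toDual, Function.comp_def] using h2
  have hc' : Continuous h' := by
    apply Continuous.inner
    · exact hcont.comp (by continuity)
    · exact continuous_const
  have hint0 := intervalIntegral.integral_eq_sub_of_hasDerivAt (a := (0:ℝ)) (b := (1:ℝ))
    (f := fun u : ℝ => f (a + u • v)) (fun t _ => hderiv t) (hc'.intervalIntegrable 0 1)
  have hint : ∫ t in (0:ℝ)..1, h' t = f b - f a := by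
    have : a + v = b := by simp [hv]
    simpa [this] using hint0
  have hmono : ∫ t in (0:ℝ)..1, h' t ≤ ∫ t in (0:ℝ)..1, (⟪f' a, v⟫_ℝ + L * t * ‖v‖ ^ 2) := by
    apply intervalIntegral.integral_mono_on (by norm_num)
    · exact hc'.intervalIntegrable 0 1
    · exact (by continuity : Continuous fun t : ℝ => ⟪f' a, v⟫_ℝ + L * t * ‖v‖ ^ 2).intervalIntegrable 0 1
    · intro t ht
      rcases ht with ⟨ht0, ht1⟩
      have heq : h' t - ⟪f' a, v⟫_ℝ = ⟪f' (a + t • v) - f' a, v⟫_ℝ := by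
        rw [inner_sub_left]
      have hcs : ⟪f' (a + t • v) - f' a, v⟫_ℝ ≤ ‖f' (a + t • v) - f' a‖ * ‖v‖ :=
        real_inner_le_norm _ _
      have hlip' : ‖f' (a + t • v) - f' a‖ ≤ L * (t * ‖v‖) := by
        have := hlip (a + t • v) a
        simpa [norm_smul, abs_of_nonneg ht0] using this
      have : h' t - ⟪f' a, v⟫_ℝ ≤ L * t * ‖v‖ ^ 2 := by
        rw [heq]
        calc ⟪f' (a + t • v) - f' a, v⟫_ℝ ≤ ‖f' (a + t • v) - f' a‖ * ‖v‖ := hcs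
        _ ≤ L * (t * ‖v‖) * ‖v‖ := by
            apply mul_le_mul_of_nonneg_right hlip' (norm_nonneg v)
        _ = L * t * ‖v‖ ^ 2 := by ring
      linarith
  have hval : ∫ t in (0:ℝ)..1, (⟪f' a, v⟫_ℝ + L * t * ‖v‖ ^ 2)
      = ⟪f' a, v⟫_ℝ + L / 2 * ‖v‖ ^ 2 := by
    rw [intervalIntegral.integral_add (intervalIntegrable_const)
      ((by fun_prop : Continuous fun t : ℝ => L * t * ‖v‖ ^ 2).intervalIntegrable 0 1)]
    simp only [intervalIntegral.integral_const, smul_eq_mul]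
    have : ∫ t in (0:ℝ)..1, L * t * ‖v‖ ^ 2 = L / 2 * ‖v‖ ^ 2 := by
      have : (fun t : ℝ => L * t * ‖v‖ ^ 2) = fun t : ℝ => (L * ‖v‖ ^ 2) * t := by
        funext t; ring
      rw [this, intervalIntegral.integral_const_mul, integral_id]
      ring
    rw [this]; ring
  rw [hint] at hmono
  rw [hval] at hmono
  linarith

lemma ereal_coe_sum {ι : Type*} (s : Finset ι) (h : ι → ℝ) :
    ((∑ i ∈ s, h i : ℝ) : EReal) = ∑ i ∈ s, ((h i : ℝ) : EReal) :=
  map_sum (⟨⟨Real.toEReal, EReal.coe_zero⟩, EReal.coe_add⟩ : ℝ →+ EReal) h s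

lemma piLp_sum_apply {κ : Type*} {q : ℕ} {β : Fin q → Type*}
    [∀ i, AddCommGroup (β i)] (s : Finset κ) (w : κ → PiLp 2 β) (j : Fin q) :
    (∑ k ∈ s, w k) j = ∑ k ∈ s, w k j := by
  classical
  induction s using Finset.cons_induction with
  | empty => rfl
  | cons a s ha ih => rw [Finset.sum_cons, Finset.sum_cons, ← ih]; rfl

lemma double_sum_le (s N : ℕ) (a : ℕ → ℝ) (ha : ∀ k, 0 ≤ a k) :
    ∑ t ∈ Finset.range N, ∑ k ∈ Finset.Ico (t - s) t, a k
      ≤ s * ∑ k ∈ Finset.range N, a k := by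
  classical
  have key : ∀ t ∈ Finset.range N, ∑ k ∈ Finset.Ico (t - s) t, a k
      = ∑ k ∈ Finset.range N, (if k ∈ Finset.Ico (t - s) t then a k else 0) := by
    intro t ht
    rw [Finset.sum_ite_mem]
    congr 1
    refine (Finset.inter_eq_right.2 ?_).symm
    intro k hk
    simp only [Finset.mem_Ico] at hk
    simp only [Finset.mem_range] at ht ⊢
    omega
  rw [Finset.sum_congr rfl key, Finset.sum_comm]
  have inner_le : ∀ k ∈ Finset.range N,
      (∑ t ∈ Finset.range N, if k ∈ Finset.Ico (t - s) t then a k else 0) ≤ s * a k := by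
    intro k _
    have hsub : (Finset.range N).filter (fun t => k ∈ Finset.Ico (t - s) t)
        ⊆ Finset.Ico (k + 1) (k + s + 1) := by
      intro t ht
      simp only [Finset.mem_filter, Finset.mem_Ico, Finset.mem_range] at ht ⊢
      omega
    calc (∑ t ∈ Finset.range N, if k ∈ Finset.Ico (t - s) t then a k else 0)
        = ∑ t ∈ (Finset.range N).filter (fun t => k ∈ Finset.Ico (t - s) t), a k := by
          rw [Finset.sum_filter]
      _ ≤ ∑ t ∈ Finset.Ico (k + 1) (k + s + 1), a k :=
          Finset.sum_le_sum_of_subset_of_nonneg hsub (fun _ _ _ => ha k)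
      _ = s * a k := by
          rw [Finset.sum_const, Nat.card_Ico]
          have hcard : k + s + 1 - (k + 1) = s := by omega
          rw [hcard, nsmul_eq_mul]
  calc ∑ k ∈ Finset.range N, ∑ t ∈ Finset.range N,
        (if k ∈ Finset.Ico (t - s) t then a k else 0)
      ≤ ∑ k ∈ Finset.range N, s * a k := Finset.sum_le_sum inner_le
    _ = s * ∑ k ∈ Finset.range N, a k := by rw [Finset.mul_sum]

lemma piLp_norm_apply_le {q : ℕ} {β : Fin q → Type*}
    [∀ i, SeminormedAddCommGroup (β i)] (u : PiLp 2 β) (i : Fin q) :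
    ‖u i‖ ≤ ‖u‖ := by
  have h1 : ‖u i‖ ^ 2 ≤ ‖u‖ ^ 2 := by
    rw [PiLp.norm_sq_eq_of_L2]
    exact Finset.single_le_sum (f := fun j => ‖u j‖ ^ 2)
      (fun j _ => sq_nonneg _) (Finset.mem_univ i)
  nlinarith [norm_nonneg (u i), norm_nonneg u]

lemma ereal_sum_ne_bot {ι : Type*} (s : Finset ι) (h : ι → EReal)
    (hne : ∀ j ∈ s, h j ≠ ⊥) : ∑ j ∈ s, h j ≠ ⊥ := by
  classical
  induction s using Finset.cons_induction with
  | empty => simp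
  | cons a s ha ih =>
    rw [Finset.sum_cons, Ne, EReal.add_eq_bot_iff]
    push_neg
    exact ⟨hne a (Finset.mem_cons_self a s),
      ih fun j hj => hne j (Finset.mem_cons_of_mem hj)⟩

lemma sq_le_imp {a b : ℝ} (hb : 0 ≤ b) (h : a ^ 2 ≤ b ^ 2) (ha : 0 ≤ a) : a ≤ b := by
  nlinarith

end Helpers

set_option maxHeartbeats 1000000

theorem stmt_2
    (p s : ℕ) (hp : 1 ≤ p) (d : Fin p → ℕ) (hd : ∀ i, 1 ≤ d i)
    (τ : Fin p → Fin p → ℕ → ℕ)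
    (hτ_le : ∀ i j t, τ i j t ≤ t)
    (hτ_ge : ∀ i j t, t ≤ τ i j t + s)
    (hτ_self : ∀ i t, τ i i t = t)
    (x : (i : Fin p) → ℕ → EuclideanSpace ℝ (Fin (d i)))
    (X : ℕ → EE p d) (hX : ∀ t i, X t i = x i t)
    (Xl : Fin p → ℕ → EE p d) (hXl : ∀ i t j, Xl i t j = x j (τ i j t))
    (T : Fin p → Set ℕ)
    (hT : ∀ i t, ∃ k ∈ T i, t ≤ k ∧ k ≤ t + s)
    (η L : ℝ) (hη : 0 < η) (hL : 0 < L)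
    (f : EE p d → ℝ) (f' : EE p d → EE p d)
    (hf : ∀ y, HasGradientAt f (f' y) y)
    (hlip : ∀ y z, ‖f' y - f' z‖ ≤ L * ‖y - z‖)
    (g : (i : Fin p) → EuclideanSpace ℝ (Fin (d i)) → EReal)
    (hg_nebot : ∀ i z, g i z ≠ ⊥)
    (hg_proper : ∀ i, ∃ z, g i z ≠ ⊤)
    (hg_lsc : ∀ i, LowerSemicontinuous (g i))
    (F : EE p d → EReal)
    (hF : ∀ y, F y = (f y : EReal) + ∑ i, g i (y i))
    (hF_bdd : ∃ m : ℝ, ∀ y, (m : EReal) ≤ F y)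
    (hF0 : F (X 0) < ⊤)
    (hskip : ∀ i t, t ∉ T i → x i (t + 1) = x i t)
    (hupd : ∀ i t, t ∈ T i → ∀ z : EuclideanSpace ℝ (Fin (d i)),
      g i (x i (t + 1)) +
        ((1 / (2 * η) * ‖x i (t + 1) - (x i t - η • f' (Xl i t) i)‖ ^ 2 : ℝ) : EReal)
      ≤ g i z + ((1 / (2 * η) * ‖z - (x i t - η • f' (Xl i t) i)‖ ^ 2 : ℝ) : EReal))
    (hstep : η < 1 / (L * (1 + 2 * Real.sqrt p * s))) :
    Summable (fun t => ‖X (t + 1) - X t‖ ^ 2) := by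
  classical
  set δ : (i : Fin p) → ℕ → EuclideanSpace ℝ (Fin (d i)) :=
    fun i t => x i (t + 1) - x i t with hδ
  set Δ : ℕ → EE p d := fun t => X (t + 1) - X t with hΔdef
  have hΔapply : ∀ t i, Δ t i = δ i t := by
    intro t i
    show X (t + 1) i - X t i = x i (t + 1) - x i t
    rw [hX, hX]
  have hΔnorm : ∀ t, ‖Δ t‖ ^ 2 = ∑ i, ‖δ i t‖ ^ 2 := by
    intro t
    rw [PiLp.norm_sq_eq_of_L2]
    exact Finset.sum_congr rfl fun i _ => by rw [hΔapply]
  -- constants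
  have hp' : (1 : ℝ) ≤ (p : ℝ) := by exact_mod_cast hp
  set sp : ℝ := Real.sqrt p with hsp
  have hsp0 : 0 < sp := Real.sqrt_pos.2 (by linarith)
  have hsp2 : sp ^ 2 = (p : ℝ) := Real.sq_sqrt (by linarith)
  have hs0 : (0:ℝ) ≤ (s:ℝ) := Nat.cast_nonneg s
  set c : ℝ := 1 / (2 * η) - L / 2 - L * sp * s with hcdef
  have hcpos : 0 < c := by
    have hD : 0 < L * (1 + 2 * sp * s) := by
      have h0 : (0:ℝ) < 1 + 2 * sp * s := by positivity
      exact mul_pos hL h0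
    have h1 : η * (L * (1 + 2 * sp * s)) < 1 := by
      have := (lt_div_iff₀ hD).mp hstep
      linarith
    have h2 : c * (2 * η) = 1 - η * (L * (1 + 2 * sp * s)) := by
      rw [hcdef]; field_simp; ring
    nlinarith
  -- g finite along the iterates
  have hfin : ∀ t i, g i (x i t) ≠ ⊤ := by
    intro t
    induction t with
    | zero =>
      intro i htop
      have hrest : ∑ j ∈ Finset.univ.erase i, g j (x j 0) ≠ ⊥ :=
        ereal_sum_ne_bot _ _ fun j _ => hg_nebot j _
      have hsum : ∑ j, g j (x j 0) = ⊤ := by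
        rw [← Finset.add_sum_erase Finset.univ _ (Finset.mem_univ i), htop,
          EReal.top_add_of_ne_bot hrest]
      have hFX : F (X 0) = ⊤ := by
        rw [hF]
        have hsum' : ∑ j, g j (X 0 j) = ⊤ := by
          rw [Finset.sum_congr rfl fun j _ => by rw [hX]]
          exact hsum
        rw [hsum', EReal.coe_add_top]
      rw [hFX] at hF0
      exact lt_irrefl _ hF0
    | succ t ih =>
      intro i
      by_cases hTi : t ∈ T i
      · have H := hupd i t hTi (x i t)
        have e1 : x i t - (x i t - η • f' (Xl i t) i) = η • f' (Xl i t) i :=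
          sub_sub_cancel _ _
        rw [e1] at H
        intro htop
        rw [htop, EReal.top_add_of_ne_bot (EReal.coe_ne_bot _)] at H
        have hgc : g i (x i t) = ((g i (x i t)).toReal : EReal) :=
          (EReal.coe_toReal (ih i) (hg_nebot i _)).symm
        rw [hgc, ← EReal.coe_add] at H
        exact (EReal.coe_lt_top _).not_ge H
      · rw [hskip i t hTi]; exact ih i
  set G : Fin p → ℕ → ℝ := fun i t => (g i (x i t)).toReal with hG
  have hGcoe : ∀ i t, ((G i t : ℝ) : EReal) = g i (x i t) := fun i t =>
    EReal.coe_toReal (hfin t i) (hg_nebot i _)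
  -- real proximal inequality
  have hProx : ∀ i t,
      G i (t + 1) + 1 / (2 * η) * ‖δ i t‖ ^ 2 + ⟪δ i t, f' (Xl i t) i⟫_ℝ ≤ G i t := by
    intro i t
    by_cases hTi : t ∈ T i
    · have H := hupd i t hTi (x i t)
      set v := f' (Xl i t) i with hv
      have e1 : x i t - (x i t - η • v) = η • v := sub_sub_cancel _ _
      have e2 : x i (t + 1) - (x i t - η • v) = δ i t + η • v := by
        show x i (t + 1) - (x i t - η • v) = (x i (t + 1) - x i t) + η • v
        abel
      rw [e1, e2, ← hGcoe i (t + 1), ← hGcoe i t, ← EReal.coe_add, ← EReal.coe_add,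
        EReal.coe_le_coe_iff] at H
      have hexp : ‖δ i t + η • v‖ ^ 2
          = ‖δ i t‖ ^ 2 + 2 * (η * ⟪δ i t, v⟫_ℝ) + ‖η • v‖ ^ 2 := by
        rw [norm_add_sq_real, real_inner_smul_right]
      have hkey : 1 / (2 * η) * ‖δ i t + η • v‖ ^ 2
          = 1 / (2 * η) * ‖δ i t‖ ^ 2 + ⟪δ i t, v⟫_ℝ + 1 / (2 * η) * ‖η • v‖ ^ 2 := by
        rw [hexp]
        field_simp
      rw [hkey] at H
      linarith
    · have hx1 : x i (t + 1) = x i t := hskip i t hTi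
      have hδ0 : δ i t = 0 := by
        show x i (t + 1) - x i t = 0
        rw [hx1, sub_self]
      have hGeq : G i (t + 1) = G i t := by
        show (g i (x i (t+1))).toReal = (g i (x i t)).toReal
        rw [hx1]
      rw [hδ0, hGeq]
      simp
  -- distance to delayed iterate
  have hE1 : ∀ i t, ‖X t - Xl i t‖ ≤ ∑ k ∈ Finset.Ico (t - s) t, ‖Δ k‖ := by
    intro i t
    set w : ℕ → EE p d :=
      fun k => WithLp.toLp 2 (fun j => if τ i j t ≤ k then δ j k else 0) with hw
    have hwj : ∀ k j, w k j = if τ i j t ≤ k then δ j k else 0 := fun k j => rfl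
    have hsum : X t - Xl i t = ∑ k ∈ Finset.Ico (t - s) t, w k := by
      refine WithLp.ofLp_injective 2 (funext fun j => ?_)
      have hlhs : (X t - Xl i t) j = x j t - x j (τ i j t) := by
        show X t j - Xl i t j = _
        rw [hX, hXl]
      rw [piLp_sum_apply, hlhs, Finset.sum_congr rfl fun k _ => hwj k j]
      have hfil : ∑ k ∈ Finset.Ico (t - s) t, (if τ i j t ≤ k then δ j k else 0)
          = ∑ k ∈ Finset.Ico (τ i j t) t, δ j k := by
        rw [← Finset.sum_filter]
        congr 1
        ext k
        simp only [Finset.mem_filter, Finset.mem_Ico]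
        have h1 := hτ_ge i j t
        have h2 := hτ_le i j t
        omega
      have htel : ∑ k ∈ Finset.Ico (τ i j t) t, δ j k = x j t - x j (τ i j t) := by
        rw [Finset.sum_Ico_eq_sub _ (hτ_le i j t)]
        have hts : ∀ n, ∑ k ∈ Finset.range n, δ j k = x j n - x j 0 := by
          intro n
          simp only [hδ]
          exact Finset.sum_range_sub (fun k => x j k) n
        rw [hts, hts]
        abel
      rw [hfil, htel]
    rw [hsum]
    refine (norm_sum_le _ _).trans (Finset.sum_le_sum fun k _ => ?_)
    have hsq : ‖w k‖ ^ 2 ≤ ‖Δ k‖ ^ 2 := by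
      rw [PiLp.norm_sq_eq_of_L2, PiLp.norm_sq_eq_of_L2]
      refine Finset.sum_le_sum fun j _ => ?_
      rw [hwj, hΔapply]
      by_cases hcc : τ i j t ≤ k
      · rw [if_pos hcc]
      · rw [if_neg hcc, norm_zero]
        nlinarith [sq_nonneg ‖δ j k‖]
    exact sq_le_imp (norm_nonneg _) hsq (norm_nonneg _)
  -- Cauchy-Schwarz over blocks
  have hE2 : ∀ t, ∑ i, ‖δ i t‖ ≤ sp * ‖Δ t‖ := by
    intro t
    have h := sq_sum_le_card_mul_sum_sq (s := Finset.univ) (f := fun i => ‖δ i t‖)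
    have hcard : ((Finset.univ : Finset (Fin p)).card : ℝ) = (p : ℝ) := by
      simp
    have h2 : (∑ i, ‖δ i t‖) ^ 2 ≤ (sp * ‖Δ t‖) ^ 2 := by
      have := h
      rw [hcard] at this
      calc (∑ i, ‖δ i t‖) ^ 2 ≤ (p : ℝ) * ∑ i, ‖δ i t‖ ^ 2 := this
        _ = (p : ℝ) * ‖Δ t‖ ^ 2 := by rw [hΔnorm]
        _ = (sp * ‖Δ t‖) ^ 2 := by rw [mul_pow, hsp2]
    exact sq_le_imp (by positivity) h2 (Finset.sum_nonneg fun i _ => norm_nonneg _)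
  -- descent lemma
  have hDesc : ∀ t, f (X (t + 1)) ≤ f (X t) + ⟪f' (X t), Δ t⟫_ℝ + L / 2 * ‖Δ t‖ ^ 2 := by
    intro t
    exact descent_lemma f f' hf L hL.le hlip (X t) (X (t + 1))
  have hinner : ∀ t, ⟪f' (X t), Δ t⟫_ℝ = ∑ i, ⟪f' (X t) i, δ i t⟫_ℝ := by
    intro t
    rw [PiLp.inner_apply]
    exact Finset.sum_congr rfl fun i _ => by rw [hΔapply]
  set φ : ℕ → ℝ := fun t => f (X t) + ∑ i, G i t with hφ
  -- one-step estimate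
  have honestep : ∀ t,
      φ (t + 1) + (1 / (2 * η) - L / 2 - L * sp * s / 2) * ‖Δ t‖ ^ 2
        ≤ φ t + (L * sp / 2) * ∑ k ∈ Finset.Ico (t - s) t, ‖Δ k‖ ^ 2 := by
    intro t
    set K : ℝ := ∑ k ∈ Finset.Ico (t - s) t, ‖Δ k‖ with hK
    have hK0 : 0 ≤ K := Finset.sum_nonneg fun k _ => norm_nonneg _
    -- summed proximal inequality
    have h1 : (∑ i, G i (t + 1)) + 1 / (2 * η) * ‖Δ t‖ ^ 2
        + ∑ i, ⟪δ i t, f' (Xl i t) i⟫_ℝ ≤ ∑ i, G i t := by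
      have := Finset.sum_le_sum (s := Finset.univ) fun i _ => hProx i t
      rw [Finset.sum_add_distrib, Finset.sum_add_distrib, ← Finset.mul_sum, ← hΔnorm] at this
      linarith
    -- cross term bound
    have h3 : ∑ i, (⟪f' (X t) i, δ i t⟫_ℝ - ⟪δ i t, f' (Xl i t) i⟫_ℝ)
        ≤ L * K * (sp * ‖Δ t‖) := by
      have hterm : ∀ i, ⟪f' (X t) i, δ i t⟫_ℝ - ⟪δ i t, f' (Xl i t) i⟫_ℝ
          ≤ L * K * ‖δ i t‖ := by
        intro i
        have e3 : ⟪f' (X t) i - f' (Xl i t) i, δ i t⟫_ℝ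
            = ⟪f' (X t) i, δ i t⟫_ℝ - ⟪δ i t, f' (Xl i t) i⟫_ℝ := by
          rw [inner_sub_left]
          rw [real_inner_comm (f' (Xl i t) i) (δ i t)]
        rw [← e3]
        have happly : f' (X t) i - f' (Xl i t) i = (f' (X t) - f' (Xl i t)) i := rfl
        calc ⟪f' (X t) i - f' (Xl i t) i, δ i t⟫_ℝ
            ≤ ‖f' (X t) i - f' (Xl i t) i‖ * ‖δ i t‖ := real_inner_le_norm _ _
          _ ≤ ‖f' (X t) - f' (Xl i t)‖ * ‖δ i t‖ := by
              rw [happly]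
              exact mul_le_mul_of_nonneg_right
                (piLp_norm_apply_le (f' (X t) - f' (Xl i t)) i) (norm_nonneg _)
          _ ≤ (L * ‖X t - Xl i t‖) * ‖δ i t‖ :=
              mul_le_mul_of_nonneg_right (hlip _ _) (norm_nonneg _)
          _ ≤ (L * K) * ‖δ i t‖ := by
              refine mul_le_mul_of_nonneg_right ?_ (norm_nonneg _)
              exact mul_le_mul_of_nonneg_left (hE1 i t) hL.le
      calc ∑ i, (⟪f' (X t) i, δ i t⟫_ℝ - ⟪δ i t, f' (Xl i t) i⟫_ℝ)
          ≤ ∑ i, L * K * ‖δ i t‖ := Finset.sum_le_sum fun i _ => hterm i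
        _ = L * K * ∑ i, ‖δ i t‖ := (Finset.mul_sum _ _ _).symm
        _ ≤ L * K * (sp * ‖Δ t‖) := by
            refine mul_le_mul_of_nonneg_left (hE2 t) ?_
            positivity
    -- K * ‖Δ t‖ bound
    have h4 : K * ‖Δ t‖ ≤ (1 / 2) * (∑ k ∈ Finset.Ico (t - s) t, ‖Δ k‖ ^ 2)
        + ((s : ℝ) / 2) * ‖Δ t‖ ^ 2 := by
      have hcard : ((Finset.Ico (t - s) t).card : ℝ) ≤ (s : ℝ) := by
        rw [Nat.card_Ico]
        exact_mod_cast Nat.sub_le_iff_le_add.2 (by omega : t ≤ s + (t - s))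
      calc K * ‖Δ t‖ = ∑ k ∈ Finset.Ico (t - s) t, ‖Δ k‖ * ‖Δ t‖ := by
            rw [hK, Finset.sum_mul]
        _ ≤ ∑ k ∈ Finset.Ico (t - s) t, ((1:ℝ)/2 * ‖Δ k‖ ^ 2 + 1/2 * ‖Δ t‖ ^ 2) := by
            refine Finset.sum_le_sum fun k _ => ?_
            nlinarith [sq_nonneg (‖Δ k‖ - ‖Δ t‖)]
        _ = (1/2) * (∑ k ∈ Finset.Ico (t - s) t, ‖Δ k‖ ^ 2)
            + ((Finset.Ico (t - s) t).card : ℝ) * (1/2 * ‖Δ t‖ ^ 2) := by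
            rw [Finset.sum_add_distrib, ← Finset.mul_sum, Finset.sum_const, nsmul_eq_mul]
        _ ≤ (1/2) * (∑ k ∈ Finset.Ico (t - s) t, ‖Δ k‖ ^ 2) + ((s:ℝ)/2) * ‖Δ t‖ ^ 2 := by
            have : ((Finset.Ico (t - s) t).card : ℝ) * (1/2 * ‖Δ t‖ ^ 2)
                ≤ (s : ℝ) * (1/2 * ‖Δ t‖ ^ 2) :=
              mul_le_mul_of_nonneg_right hcard (by positivity)
            linarith
    -- combine
    have h2 := hDesc t
    rw [hinner t] at h2
    have hsplit : ∑ i, ⟪f' (X t) i, δ i t⟫_ℝ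
        = ∑ i, (⟪f' (X t) i, δ i t⟫_ℝ - ⟪δ i t, f' (Xl i t) i⟫_ℝ)
          + ∑ i, ⟪δ i t, f' (Xl i t) i⟫_ℝ := by
      rw [← Finset.sum_add_distrib]
      exact Finset.sum_congr rfl fun i _ => by ring
    have h5 : L * K * (sp * ‖Δ t‖)
        ≤ (L * sp / 2) * (∑ k ∈ Finset.Ico (t - s) t, ‖Δ k‖ ^ 2)
          + (L * sp * s / 2) * ‖Δ t‖ ^ 2 := by
      have hLsp : 0 ≤ L * sp := by positivity
      have := mul_le_mul_of_nonneg_left h4 hLsp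
      calc L * K * (sp * ‖Δ t‖) = (L * sp) * (K * ‖Δ t‖) := by ring
        _ ≤ (L * sp) * ((1/2) * (∑ k ∈ Finset.Ico (t - s) t, ‖Δ k‖ ^ 2)
            + ((s:ℝ)/2) * ‖Δ t‖ ^ 2) := this
        _ = (L * sp / 2) * (∑ k ∈ Finset.Ico (t - s) t, ‖Δ k‖ ^ 2)
            + (L * sp * s / 2) * ‖Δ t‖ ^ 2 := by ring
    rw [hsplit] at h2
    simp only [hφ]
    linarith
  -- telescoping over t < N
  have hPhiN : ∀ N, φ N + (1 / (2 * η) - L / 2 - L * sp * s / 2)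
      * ∑ t ∈ Finset.range N, ‖Δ t‖ ^ 2
      ≤ φ 0 + (L * sp / 2) * ∑ t ∈ Finset.range N,
          ∑ k ∈ Finset.Ico (t - s) t, ‖Δ k‖ ^ 2 := by
    intro N
    induction N with
    | zero => simp
    | succ N ih =>
      rw [Finset.sum_range_succ, Finset.sum_range_succ]
      have := honestep N
      have hmul : (L * sp / 2) * (∑ t ∈ Finset.range N,
          ∑ k ∈ Finset.Ico (t - s) t, ‖Δ k‖ ^ 2
          + ∑ k ∈ Finset.Ico (N - s) N, ‖Δ k‖ ^ 2)
          = (L * sp / 2) * ∑ t ∈ Finset.range N,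
            ∑ k ∈ Finset.Ico (t - s) t, ‖Δ k‖ ^ 2
          + (L * sp / 2) * ∑ k ∈ Finset.Ico (N - s) N, ‖Δ k‖ ^ 2 := by ring
      rw [hmul]
      have hmul2 : (1 / (2 * η) - L / 2 - L * sp * s / 2)
          * (∑ t ∈ Finset.range N, ‖Δ t‖ ^ 2 + ‖Δ N‖ ^ 2)
          = (1 / (2 * η) - L / 2 - L * sp * s / 2) * ∑ t ∈ Finset.range N, ‖Δ t‖ ^ 2
          + (1 / (2 * η) - L / 2 - L * sp * s / 2) * ‖Δ N‖ ^ 2 := by ring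
      rw [hmul2]
      linarith
  -- lower bound on φ
  obtain ⟨m, hm⟩ := hF_bdd
  have hφm : ∀ N, m ≤ φ N := by
    intro N
    have h := hm (X N)
    rw [hF] at h
    have hgsum : ∑ i, g i (X N i) = ((∑ i, G i N : ℝ) : EReal) := by
      rw [ereal_coe_sum]
      exact Finset.sum_congr rfl fun i _ => by rw [hX, ← hGcoe]
    rw [hgsum, ← EReal.coe_add] at h
    exact_mod_cast h
  -- final bound on partial sums
  have hbound : ∀ N, ∑ t ∈ Finset.range N, ‖Δ t‖ ^ 2 ≤ (φ 0 - m) / c := by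
    intro N
    have h1 := hPhiN N
    have h2 := double_sum_le s N (fun k => ‖Δ k‖ ^ 2) (fun k => sq_nonneg _)
    have hLsp : (0:ℝ) ≤ L * sp / 2 := by positivity
    have h3 : (L * sp / 2) * ∑ t ∈ Finset.range N,
        ∑ k ∈ Finset.Ico (t - s) t, ‖Δ k‖ ^ 2
        ≤ (L * sp / 2) * ((s:ℝ) * ∑ t ∈ Finset.range N, ‖Δ t‖ ^ 2) :=
      mul_le_mul_of_nonneg_left h2 hLsp
    have h4 : φ N + c * ∑ t ∈ Finset.range N, ‖Δ t‖ ^ 2 ≤ φ 0 := by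
      have hceq : c = (1 / (2 * η) - L / 2 - L * sp * s / 2) - (L * sp / 2) * s := by
        rw [hcdef]; ring
      rw [hceq]
      have expand : ((1 / (2 * η) - L / 2 - L * sp * s / 2) - (L * sp / 2) * s)
          * ∑ t ∈ Finset.range N, ‖Δ t‖ ^ 2
          = (1 / (2 * η) - L / 2 - L * sp * s / 2) * ∑ t ∈ Finset.range N, ‖Δ t‖ ^ 2
          - (L * sp / 2) * ((s:ℝ) * ∑ t ∈ Finset.range N, ‖Δ t‖ ^ 2) := by ring
      rw [expand]
      linarith
    have h5 := hφm N
    rw [le_div_iff₀ hcpos]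
    nlinarith
  exact summable_of_sum_range_le (fun n => sq_nonneg _) hbound
end

section
/- For every i ∈ {1, …, p} and every n ∈ ℕ, Σ_{t=0}^{n} ‖x^i(t+1) − x^i(t)‖ ≤ (2s+1)·Σ_{t=0}^{n} ‖x(t+1) − x(t)‖. Consequently, if the global sequence has finite length, i.e., Σ_{t=0}^{∞} ‖x(t+1) − x(t)‖ < ∞, then each local sequence has finite length: Σ_{t=0}^{∞} ‖x^i(t+1) − x^i(t)‖ < ∞. -/
open Filter Topology

private lemma tel_Ico {M : Type*} [AddCommGroup M] (f : ℕ → M) {m n : ℕ} (h : m ≤ n) :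
    ∑ k ∈ Finset.Ico m n, (f (k + 1) - f k) = f n - f m := by
  rw [Finset.sum_Ico_eq_sub _ h, Finset.sum_range_sub, Finset.sum_range_sub]
  abel

private lemma piLp_norm_mono {ι : Type*} [Fintype ι] {α : ι → Type*}
    [∀ i, SeminormedAddCommGroup (α i)]
    (u w : PiLp 2 α) (h : ∀ j, ‖u j‖ ≤ ‖w j‖) : ‖u‖ ≤ ‖w‖ := by
  rw [PiLp.norm_eq_sum (p := 2) (by norm_num), PiLp.norm_eq_sum (p := 2) (by norm_num)]
  refine Real.rpow_le_rpow (by positivity) ?_ (by positivity)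
  refine Finset.sum_le_sum fun j _ => ?_
  exact Real.rpow_le_rpow (norm_nonneg _) (h j) (by positivity)

theorem stmt_12
    (p s : ℕ) (hp : 1 ≤ p) (d : Fin p → ℕ) (hd : ∀ i, 1 ≤ d i)
    (τ : Fin p → Fin p → ℕ → ℕ)
    (hτ_le : ∀ i j t, τ i j t ≤ t)
    (hτ_ge : ∀ i j t, t ≤ τ i j t + s)
    (hτ_self : ∀ i t, τ i i t = t)
    (x : (i : Fin p) → ℕ → EuclideanSpace ℝ (Fin (d i)))
    (X : ℕ → EE p d) (hX : ∀ t i, X t i = x i t)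
    (Xl : Fin p → ℕ → EE p d) (hXl : ∀ i t j, Xl i t j = x j (τ i j t))
    :
    (∀ (i : Fin p) (n : ℕ),
      ∑ t ∈ Finset.range (n + 1), ‖Xl i (t + 1) - Xl i t‖ ≤
        (2 * s + 1) * ∑ t ∈ Finset.range (n + 1), ‖X (t + 1) - X t‖) ∧
    (Summable (fun t => ‖X (t + 1) - X t‖) →
      ∀ i : Fin p, Summable (fun t => ‖Xl i (t + 1) - Xl i t‖)) := by
  -- key pointwise bound
  have key : ∀ (i : Fin p) (t : ℕ),
      ‖Xl i (t + 1) - Xl i t‖ ≤ ∑ k ∈ Finset.Ico (t - s) (t + 1), ‖X (k + 1) - X k‖ := by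
    intro i t
    set v : ℕ → EE p d := fun k => WithLp.toLp 2 fun j =>
      if τ i j t ≤ τ i j (t + 1) then
        (if k ∈ Finset.Ico (τ i j t) (τ i j (t + 1)) then x j (k + 1) - x j k else 0)
      else
        (if k ∈ Finset.Ico (τ i j (t + 1)) (τ i j t) then x j k - x j (k + 1) else 0)
      with hv
    have hdecomp : Xl i (t + 1) - Xl i t = ∑ k ∈ Finset.Ico (t - s) (t + 1), v k := by
      have hblock : ∀ j : Fin p, (Xl i (t + 1) - Xl i t) j
          = (∑ k ∈ Finset.Ico (t - s) (t + 1), v k) j := by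
        intro j
        have happ : (∑ k ∈ Finset.Ico (t - s) (t + 1), v k) j
            = ∑ k ∈ Finset.Ico (t - s) (t + 1), v k j := by
            rw [WithLp.ofLp_sum, Finset.sum_apply]
        have hL : (Xl i (t + 1) - Xl i t) j = x j (τ i j (t + 1)) - x j (τ i j t) := by
          simp [hXl]
        have h1 := hτ_le i j t
        have h2 := hτ_le i j (t + 1)
        have h3 := hτ_ge i j t
        have h4 := hτ_ge i j (t + 1)
        rw [hL, happ]
        by_cases h : τ i j t ≤ τ i j (t + 1)
        · have hvk : ∀ k, v k j =
              if k ∈ Finset.Ico (τ i j t) (τ i j (t + 1)) then x j (k + 1) - x j k else 0 := by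
            intro k; simp only [hv, PiLp.toLp_apply, if_pos h]
          rw [Finset.sum_congr rfl fun k _ => hvk k, Finset.sum_ite_mem,
            Finset.inter_eq_right.mpr (Finset.Ico_subset_Ico (by omega) (by omega))]
          exact (tel_Ico (fun k => x j k) h).symm
        · have h' := le_of_not_ge h
          have hvk : ∀ k, v k j =
              if k ∈ Finset.Ico (τ i j (t + 1)) (τ i j t) then x j k - x j (k + 1) else 0 := by
            intro k; simp only [hv, PiLp.toLp_apply, if_neg h]
          rw [Finset.sum_congr rfl fun k _ => hvk k, Finset.sum_ite_mem,
            Finset.inter_eq_right.mpr (Finset.Ico_subset_Ico (by omega) (by omega))]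
          calc x j (τ i j (t + 1)) - x j (τ i j t)
              = -∑ k ∈ Finset.Ico (τ i j (t + 1)) (τ i j t), (x j (k + 1) - x j k) := by
                rw [tel_Ico (fun k => x j k) h']; abel
            _ = ∑ k ∈ Finset.Ico (τ i j (t + 1)) (τ i j t), (x j k - x j (k + 1)) := by
                rw [← Finset.sum_neg_distrib]
                exact Finset.sum_congr rfl fun k _ => by abel
      exact PiLp.ext hblock
    rw [hdecomp]
    refine le_trans (norm_sum_le _ _) (Finset.sum_le_sum ?_)
    intro k _
    apply piLp_norm_mono
    intro j
    have hXk : (X (k + 1) - X k) j = x j (k + 1) - x j k := by simp [hX]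
    rw [hXk]
    simp only [hv, PiLp.toLp_apply]
    split_ifs with h1 h2 h3
    · exact le_rfl
    · simp
    · exact (norm_sub_rev (x j (k + 1)) (x j k)).ge
    · simp
  -- summed bound
  have part1 : ∀ (i : Fin p) (n : ℕ),
      ∑ t ∈ Finset.range (n + 1), ‖Xl i (t + 1) - Xl i t‖ ≤
        (2 * s + 1) * ∑ t ∈ Finset.range (n + 1), ‖X (t + 1) - X t‖ := by
    intro i n
    set g : ℕ → ℝ := fun k => ‖X (k + 1) - X k‖ with hg
    calc ∑ t ∈ Finset.range (n + 1), ‖Xl i (t + 1) - Xl i t‖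
        ≤ ∑ t ∈ Finset.range (n + 1), ∑ k ∈ Finset.Ico (t - s) (t + 1), g k :=
          Finset.sum_le_sum (fun t _ => key i t)
      _ = ∑ t ∈ Finset.range (n + 1), ∑ k ∈ Finset.range (n + 1),
            (if k ∈ Finset.Ico (t - s) (t + 1) then g k else 0) := by
          refine Finset.sum_congr rfl fun t ht => ?_
          rw [Finset.sum_ite_mem, Finset.inter_eq_right.mpr ?_]
          have : t + 1 ≤ n + 1 := by
            have := Finset.mem_range.mp ht; omega
          rw [Finset.range_eq_Ico]
          exact Finset.Ico_subset_Ico (Nat.zero_le _) this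
      _ = ∑ k ∈ Finset.range (n + 1), ∑ t ∈ Finset.range (n + 1),
            (if k ∈ Finset.Ico (t - s) (t + 1) then g k else 0) := Finset.sum_comm
      _ ≤ ∑ k ∈ Finset.range (n + 1), (2 * s + 1) * g k := by
          refine Finset.sum_le_sum fun k _ => ?_
          rw [← Finset.sum_filter, Finset.sum_const, nsmul_eq_mul]
          have hcard : ((Finset.range (n + 1)).filter
              (fun t => k ∈ Finset.Ico (t - s) (t + 1))).card ≤ 2 * s + 1 := by
            have hsubs : (Finset.range (n + 1)).filter
                (fun t => k ∈ Finset.Ico (t - s) (t + 1)) ⊆ Finset.Icc k (k + s) := by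
              intro t ht
              simp only [Finset.mem_filter, Finset.mem_range, Finset.mem_Ico] at ht
              simp only [Finset.mem_Icc]
              omega
            calc _ ≤ (Finset.Icc k (k + s)).card := Finset.card_le_card hsubs
              _ = s + 1 := by rw [Nat.card_Icc]; omega
              _ ≤ 2 * s + 1 := by omega
          have hgk : 0 ≤ g k := norm_nonneg _
          have : (((Finset.range (n + 1)).filter
                (fun t => k ∈ Finset.Ico (t - s) (t + 1))).card : ℝ) ≤ ((2 * s + 1 : ℕ) : ℝ) := by
            exact_mod_cast hcard
          calc (((Finset.range (n + 1)).filter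
                (fun t => k ∈ Finset.Ico (t - s) (t + 1))).card : ℝ) * g k
              ≤ ((2 * s + 1 : ℕ) : ℝ) * g k := mul_le_mul_of_nonneg_right this hgk
            _ = (2 * s + 1) * g k := by push_cast; ring
      _ = (2 * s + 1) * ∑ k ∈ Finset.range (n + 1), g k := by
          rw [Finset.mul_sum]
  refine ⟨part1, ?_⟩
  intro hsum i
  have hc0 : (0:ℝ) ≤ (2 * s + 1) * ∑' t, ‖X (t + 1) - X t‖ := by
    apply mul_nonneg (by positivity)
    exact tsum_nonneg fun t => norm_nonneg _
  apply summable_of_sum_range_le (fun n => norm_nonneg _)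
  intro n
  cases n with
  | zero => simpa using hc0
  | succ m =>
    calc ∑ t ∈ Finset.range (m + 1), ‖Xl i (t + 1) - Xl i t‖
        ≤ (2 * s + 1) * ∑ t ∈ Finset.range (m + 1), ‖X (t + 1) - X t‖ := part1 i m
      _ ≤ (2 * s + 1) * ∑' t, ‖X (t + 1) - X t‖ := by
          apply mul_le_mul_of_nonneg_left _ (by positivity)
          exact Summable.sum_le_tsum _ (fun t _ => norm_nonneg _) hsum
end

section
/- Suppose the step size satisfies 0 < η < 1/(L(1 + 2√p·s)), that the global sequence {x(t)} is bounded, and that the sufficient decrease property holds: there exist α > 0 and T₀ ∈ ℕ such that for all t ≥ T₀, F(x(t+1)) ≤ F(x(t)) − α·‖x(t+1) − x(t)‖². Then the limit F* = lim_{t→∞} F(x(t)) exists and is finite, and every cluster point x* of {x(t)} satisfies F(x*) = F*. -/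
open Filter Topology

private lemma my_coe_sum {ι : Type*} (s : Finset ι) (r : ι → ℝ) :
    ∑ i ∈ s, ((r i : EReal)) = ((∑ i ∈ s, r i : ℝ) : EReal) :=
  (map_sum (⟨⟨Real.toEReal, EReal.coe_zero⟩, EReal.coe_add⟩ : ℝ →+ EReal) r s).symm

private lemma my_sum_ne_bot {ι : Type*} (s : Finset ι) (v : ι → EReal) :
    (∀ i ∈ s, v i ≠ ⊥) → ∑ i ∈ s, v i ≠ ⊥ := by
  classical
  induction s using Finset.induction_on with
  | empty => intro _; simp
  | @insert a s ha ih =>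
    intro hb
    rw [Finset.sum_insert ha, Ne, EReal.add_eq_bot_iff]
    push_neg
    exact ⟨hb a (Finset.mem_insert_self a s),
      ih fun i hi => hb i (Finset.mem_insert_of_mem hi)⟩

private lemma my_sum_eq_top {ι : Type*} (s : Finset ι) (v : ι → EReal)
    (hb : ∀ i ∈ s, v i ≠ ⊥) {i : ι} (hi : i ∈ s) (h : v i = ⊤) : ∑ j ∈ s, v j = ⊤ := by
  classical
  rw [← Finset.add_sum_erase s v hi, h,
    EReal.top_add_of_ne_bot (my_sum_ne_bot _ _ fun j hj => hb j (Finset.mem_of_mem_erase hj))]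

private lemma my_lsc_sum {α ι : Type*} [TopologicalSpace α] (s : Finset ι) (v : ι → α → EReal) :
    (∀ i ∈ s, LowerSemicontinuous (v i)) → (∀ i ∈ s, ∀ y, v i y ≠ ⊥) →
    LowerSemicontinuous (fun y => ∑ i ∈ s, v i y) := by
  classical
  induction s using Finset.induction_on with
  | empty => intro _ _; simpa using lowerSemicontinuous_const
  | @insert a s ha ih =>
    intro h hb
    have h1 := h a (Finset.mem_insert_self a s)
    have h2 := ih (fun i hi => h i (Finset.mem_insert_of_mem hi))
      (fun i hi => hb i (Finset.mem_insert_of_mem hi))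
    have h3 := h1.add' h2 (fun y => EReal.continuousAt_add
      (Or.inr (my_sum_ne_bot _ _ (fun i hi => hb i (Finset.mem_insert_of_mem hi) y)))
      (Or.inl (hb a (Finset.mem_insert_self a s) y)))
    simpa [Finset.sum_insert ha] using h3

theorem stmt_13
    (p s : ℕ) (hp : 1 ≤ p) (d : Fin p → ℕ) (hd : ∀ i, 1 ≤ d i)
    (τ : Fin p → Fin p → ℕ → ℕ)
    (hτ_le : ∀ i j t, τ i j t ≤ t)
    (hτ_ge : ∀ i j t, t ≤ τ i j t + s)
    (hτ_self : ∀ i t, τ i i t = t)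
    (x : (i : Fin p) → ℕ → EuclideanSpace ℝ (Fin (d i)))
    (X : ℕ → EE p d) (hX : ∀ t i, X t i = x i t)
    (Xl : Fin p → ℕ → EE p d) (hXl : ∀ i t j, Xl i t j = x j (τ i j t))
    (T : Fin p → Set ℕ)
    (hT : ∀ i t, ∃ k ∈ T i, t ≤ k ∧ k ≤ t + s)
    (η L : ℝ) (hη : 0 < η) (hL : 0 < L)
    (f : EE p d → ℝ) (f' : EE p d → EE p d)
    (hf : ∀ y, HasGradientAt f (f' y) y)
    (hlip : ∀ y z, ‖f' y - f' z‖ ≤ L * ‖y - z‖)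
    (g : (i : Fin p) → EuclideanSpace ℝ (Fin (d i)) → EReal)
    (hg_nebot : ∀ i z, g i z ≠ ⊥)
    (hg_proper : ∀ i, ∃ z, g i z ≠ ⊤)
    (hg_lsc : ∀ i, LowerSemicontinuous (g i))
    (F : EE p d → EReal)
    (hF : ∀ y, F y = (f y : EReal) + ∑ i, g i (y i))
    (hF_bdd : ∃ m : ℝ, ∀ y, (m : EReal) ≤ F y)
    (hF0 : F (X 0) < ⊤)
    (hskip : ∀ i t, t ∉ T i → x i (t + 1) = x i t)
    (hupd : ∀ i t, t ∈ T i → ∀ z : EuclideanSpace ℝ (Fin (d i)),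
      g i (x i (t + 1)) +
        ((1 / (2 * η) * ‖x i (t + 1) - (x i t - η • f' (Xl i t) i)‖ ^ 2 : ℝ) : EReal)
      ≤ g i z + ((1 / (2 * η) * ‖z - (x i t - η • f' (Xl i t) i)‖ ^ 2 : ℝ) : EReal))
    (hstep : η < 1 / (L * (1 + 2 * Real.sqrt p * s)))
    (R : ℝ) (hbdd : ∀ t, ‖X t‖ ≤ R)
    (α : ℝ) (hα : 0 < α) (T₀ : ℕ)
    (hsd : ∀ t, T₀ ≤ t →
      F (X (t + 1)) + ((α * ‖X (t + 1) - X t‖ ^ 2 : ℝ) : EReal) ≤ F (X t)) :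
    ∃ Fstar : ℝ,
      Tendsto (fun t => F (X t)) atTop (𝓝 ((Fstar : ℝ) : EReal)) ∧
      ∀ xstar : EE p d,
        (∃ φ : ℕ → ℕ, StrictMono φ ∧ Tendsto (fun m => X (φ m)) atTop (𝓝 xstar)) →
        F xstar = ((Fstar : ℝ) : EReal) := by
  classical
  obtain ⟨m₀, hm₀⟩ := hF_bdd
  -- Step A: g values along the sequence stay finite
  have htop0 : ∀ i, g i (x i 0) ≠ ⊤ := by
    intro i h
    rw [hF] at hF0
    rw [my_sum_eq_top Finset.univ (fun j => g j (X 0 j)) (fun j _ => hg_nebot j _)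
      (Finset.mem_univ i) (by show g i (X 0 i) = ⊤; rw [hX 0 i]; exact h)] at hF0
    rw [EReal.add_top_of_ne_bot (EReal.coe_ne_bot _)] at hF0
    exact lt_irrefl _ hF0
  have htop : ∀ (i : Fin p) (t : ℕ), g i (x i t) ≠ ⊤ := by
    intro i t
    induction t with
    | zero => exact htop0 i
    | succ t ih =>
      by_cases ht : t ∈ T i
      · intro h
        have hu := hupd i t ht (x i t)
        rw [h, EReal.top_add_of_ne_bot (EReal.coe_ne_bot _)] at hu
        exact (EReal.add_lt_top ih (EReal.coe_ne_top _)).ne (top_le_iff.mp hu)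
      · rw [hskip i t ht]; exact ih
  set G : Fin p → ℕ → ℝ := fun i t => (g i (x i t)).toReal with hGdef
  have hgt : ∀ (i : Fin p) (t : ℕ), g i (x i t) = ((G i t : ℝ) : EReal) :=
    fun i t => (EReal.coe_toReal (htop i t) (hg_nebot i _)).symm
  set φ : ℕ → ℝ := fun t => f (X t) + ∑ i, G i t with hφdef
  have hFX : ∀ t, F (X t) = ((φ t : ℝ) : EReal) := by
    intro t
    rw [hF, hφdef]
    rw [EReal.coe_add, ← my_coe_sum]
    congr 1
    exact Finset.sum_congr rfl fun i _ => by rw [hX t i, hgt i t]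
  -- Step B: monotonicity and convergence of φ
  have hmono : ∀ t, T₀ ≤ t → φ (t + 1) + α * ‖X (t + 1) - X t‖ ^ 2 ≤ φ t := by
    intro t ht
    have h := hsd t ht
    rw [hFX (t + 1), hFX t, ← EReal.coe_add, EReal.coe_le_coe_iff] at h
    exact h
  have hlb : ∀ t, m₀ ≤ φ t := by
    intro t
    have := hm₀ (X t)
    rw [hFX t, EReal.coe_le_coe_iff] at this
    exact this
  set ψ : ℕ → ℝ := fun n => φ (T₀ + n) with hψdef
  have hanti : Antitone ψ := by
    refine antitone_nat_of_succ_le fun n => ?_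
    have h := hmono (T₀ + n) (Nat.le_add_right _ _)
    have h2 : 0 ≤ α * ‖X (T₀ + n + 1) - X (T₀ + n)‖ ^ 2 :=
      mul_nonneg hα.le (sq_nonneg _)
    show φ (T₀ + (n + 1)) ≤ φ (T₀ + n)
    have he : T₀ + (n + 1) = T₀ + n + 1 := rfl
    rw [he]
    linarith
  set Fstar : ℝ := ⨅ n, ψ n with hFsdef
  have htψ : Tendsto ψ atTop (𝓝 Fstar) := by
    refine tendsto_atTop_ciInf hanti ⟨m₀, ?_⟩
    rintro y ⟨n, rfl⟩
    exact hlb _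
  have htφ : Tendsto φ atTop (𝓝 Fstar) := by
    have h1 : Tendsto (fun t => ψ (t - T₀)) atTop (𝓝 Fstar) :=
      htψ.comp (tendsto_sub_atTop_nat T₀)
    refine h1.congr' ?_
    filter_upwards [eventually_ge_atTop T₀] with t ht
    simp only [hψdef]
    rw [Nat.add_sub_cancel' ht]
  have htendF : Tendsto (fun t => F (X t)) atTop (𝓝 ((Fstar : ℝ) : EReal)) := by
    have h := (continuous_coe_real_ereal.tendsto Fstar).comp htφ
    exact h.congr fun t => (hFX t).symm
  -- Step C: successive differences tend to 0
  have hδ0 : Tendsto (fun t => ‖X (t + 1) - X t‖) atTop (𝓝 0) := by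
    have hsq : Tendsto (fun t => ‖X (t + 1) - X t‖ ^ 2) atTop (𝓝 0) := by
      have hub : Tendsto (fun t => (φ t - φ (t + 1)) / α) atTop (𝓝 0) := by
        have h := (htφ.sub (htφ.comp (tendsto_add_atTop_nat 1))).div_const α
        simpa using h
      refine squeeze_zero' (Eventually.of_forall fun t => sq_nonneg _) ?_ hub
      filter_upwards [eventually_ge_atTop T₀] with t ht
      have h := hmono t ht
      rw [le_div_iff₀ hα]
      linarith
    have h := (Real.continuous_sqrt.tendsto 0).comp hsq
    rw [Real.sqrt_zero] at h
    exact h.congr fun t => Real.sqrt_sq (norm_nonneg _)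
  -- component-wise norm bound
  have hnle : ∀ (y : EE p d) (i : Fin p), ‖y i‖ ≤ ‖y‖ := by
    intro y i
    have h1 : ‖y‖ ^ 2 = ∑ j, ‖y j‖ ^ 2 := PiLp.norm_sq_eq_of_L2 _ y
    have h2 : ‖y i‖ ^ 2 ≤ ∑ j, ‖y j‖ ^ 2 :=
      Finset.single_le_sum (f := fun j => ‖y j‖ ^ 2) (fun j _ => sq_nonneg _)
        (Finset.mem_univ i)
    nlinarith [norm_nonneg y, norm_nonneg (y i)]
  have hcomp : ∀ (y : ℕ → EE p d) (a : EE p d), Tendsto y atTop (𝓝 a) →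
      ∀ i, Tendsto (fun m => y m i) atTop (𝓝 (a i)) := by
    intro y a hy i
    rw [tendsto_iff_norm_sub_tendsto_zero] at hy ⊢
    refine squeeze_zero (fun m => norm_nonneg _) (fun m => ?_) hy
    exact hnle (y m - a) i
  -- window lemma
  have hwin : ∀ (c : ℕ) (a b : ℕ → ℕ), Tendsto a atTop atTop →
      (∀ᶠ m in atTop, a m ≤ b m ∧ b m ≤ a m + c) →
      Tendsto (fun m => ‖X (b m) - X (a m)‖) atTop (𝓝 0) := by
    intro c a b ha hab
    have key : ∀ n k : ℕ, ‖X (n + k) - X n‖ ≤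
        ∑ j ∈ Finset.range k, ‖X (n + j + 1) - X (n + j)‖ := by
      intro n k
      induction k with
      | zero => simp
      | succ k ih =>
        show ‖X (n + k + 1) - X n‖ ≤ ∑ j ∈ Finset.range (k + 1), ‖X (n + j + 1) - X (n + j)‖
        rw [Finset.sum_range_succ]
        have h3 : ‖X (n + k + 1) - X n‖ ≤ ‖X (n + k + 1) - X (n + k)‖ + ‖X (n + k) - X n‖ :=
          norm_sub_le_norm_sub_add_norm_sub _ _ _
        linarith
    have hlim : Tendsto (fun m => ∑ j ∈ Finset.range c, ‖X (a m + j + 1) - X (a m + j)‖)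
        atTop (𝓝 0) := by
      have h0 : (0 : ℝ) = ∑ _j ∈ Finset.range c, (0 : ℝ) := by simp
      rw [h0]
      refine tendsto_finset_sum _ fun j _ => ?_
      have haj : Tendsto (fun m => a m + j) atTop atTop :=
        tendsto_atTop_mono (fun m => Nat.le_add_right _ _) ha
      exact hδ0.comp haj
    refine squeeze_zero' (Eventually.of_forall fun m => norm_nonneg _) ?_ hlim
    filter_upwards [hab] with m hm
    obtain ⟨h1, h2⟩ := hm
    obtain ⟨k, hk⟩ := Nat.exists_eq_add_of_le h1
    have hkc : k ≤ c := by omega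
    calc ‖X (b m) - X (a m)‖
        ≤ ∑ j ∈ Finset.range k, ‖X (a m + j + 1) - X (a m + j)‖ := by
          rw [hk]; exact key _ _
      _ ≤ ∑ j ∈ Finset.range c, ‖X (a m + j + 1) - X (a m + j)‖ :=
          Finset.sum_le_sum_of_subset_of_nonneg (Finset.range_subset_range.2 hkc)
            (fun _ _ _ => norm_nonneg _)
  -- continuity facts
  have hfc : Continuous f := continuous_iff_continuousAt.2 fun y => (hf y).continuousAt
  have hf'c : Continuous f' := by
    have hlw : LipschitzWith L.toNNReal f' := by
      refine LipschitzWith.of_dist_le_mul fun y z => ?_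
      rw [dist_eq_norm, dist_eq_norm, Real.coe_toNNReal L hL.le]
      exact hlip y z
    exact hlw.continuous
  refine ⟨Fstar, htendF, ?_⟩
  rintro xstar ⟨φ', hφ'm, hφ't⟩
  have hφ'top : Tendsto φ' atTop atTop := hφ'm.tendsto_atTop
  -- F is lower semicontinuous
  have hFlsc : LowerSemicontinuous F := by
    have h1 : LowerSemicontinuous (fun y : EE p d => ((f y : ℝ) : EReal)) :=
      (continuous_coe_real_ereal.comp hfc).lowerSemicontinuous
    have heval : ∀ i : Fin p, Continuous (fun y : EE p d => y i) := by
      intro i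
      refine (LipschitzWith.of_dist_le_mul (K := 1) fun y z => ?_).continuous
      rw [NNReal.coe_one, one_mul, dist_eq_norm, dist_eq_norm]
      exact hnle (y - z) i
    have h2 : LowerSemicontinuous (fun y : EE p d => ∑ i, g i (y i)) :=
      my_lsc_sum Finset.univ (fun i (y : EE p d) => g i (y i))
        (fun i _ => by
          have h := LowerSemicontinuous.comp (hg_lsc i) (heval i)
          exact h)
        (fun i _ y => hg_nebot i (y i))
    have h3 := h1.add' h2 fun y => EReal.continuousAt_add
      (Or.inl (EReal.coe_ne_top _)) (Or.inl (EReal.coe_ne_bot _))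
    have hFe : F = fun y => ((f y : ℝ) : EReal) + ∑ i, g i (y i) := funext hF
    rw [hFe]
    exact h3
  -- Direction 1 : F xstar ≤ Fstar
  have hdir1 : F xstar ≤ ((Fstar : ℝ) : EReal) := by
    refine le_of_forall_lt_imp_le_of_dense fun c hc => ?_
    have hev : ∀ᶠ m in atTop, c < F (X (φ' m)) := hφ't.eventually (hFlsc xstar c hc)
    have hconv : Tendsto (fun m => F (X (φ' m))) atTop (𝓝 ((Fstar : ℝ) : EReal)) :=
      htendF.comp hφ'top
    exact ge_of_tendsto hconv (hev.mono fun m hm => hm.le)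
  by_cases htopstar : F xstar = ⊤
  · rw [htopstar] at hdir1
    exact absurd (top_le_iff.mp hdir1) (EReal.coe_ne_top Fstar)
  -- finite values at xstar
  have hgs_ne_top : ∀ i, g i (xstar i) ≠ ⊤ := by
    intro i h
    apply htopstar
    rw [hF]
    rw [my_sum_eq_top Finset.univ (fun j => g j (xstar j)) (fun j _ => hg_nebot j _)
      (Finset.mem_univ i) h]
    exact EReal.add_top_of_ne_bot (EReal.coe_ne_bot _)
  set r : Fin p → ℝ := fun i => (g i (xstar i)).toReal with hrdef
  have hr : ∀ i, g i (xstar i) = ((r i : ℝ) : EReal) :=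
    fun i => (EReal.coe_toReal (hgs_ne_top i) (hg_nebot i _)).symm
  have hFxstar : F xstar = ((f xstar + ∑ i, r i : ℝ) : EReal) := by
    rw [hF, EReal.coe_add, ← my_coe_sum]
    congr 1
    exact Finset.sum_congr rfl fun i _ => hr i
  -- last-update times
  have hSne : ∀ (i : Fin p) (m : ℕ),
      ((Finset.Icc (φ' m) (φ' m + s)).filter (· ∈ T i)).Nonempty := by
    intro i m
    obtain ⟨k, hk, h1, h2⟩ := hT i (φ' m)
    exact ⟨k, Finset.mem_filter.2 ⟨Finset.mem_Icc.2 ⟨h1, h2⟩, hk⟩⟩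
  set tt : Fin p → ℕ → ℕ :=
    fun i m => ((Finset.Icc (φ' m) (φ' m + s)).filter (· ∈ T i)).max' (hSne i m) with httdef
  have httmem : ∀ i m, tt i m ∈ T i :=
    fun i m => (Finset.mem_filter.1 (Finset.max'_mem _ (hSne i m))).2
  have httlb : ∀ i m, φ' m ≤ tt i m :=
    fun i m => (Finset.mem_Icc.1 (Finset.mem_filter.1 (Finset.max'_mem _ (hSne i m))).1).1
  have httub : ∀ i m, tt i m ≤ φ' m + s :=
    fun i m => (Finset.mem_Icc.1 (Finset.mem_filter.1 (Finset.max'_mem _ (hSne i m))).1).2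
  have hlast : ∀ i m u, tt i m < u → u ≤ φ' m + s → u ∉ T i := by
    intro i m u h1 h2 hu
    have hlb := httlb i m
    have hle : u ≤ tt i m :=
      Finset.le_max' _ u (Finset.mem_filter.2 ⟨Finset.mem_Icc.2 ⟨by omega, h2⟩, hu⟩)
    omega
  have heq : ∀ i m, x i (φ' m + s + 1) = x i (tt i m + 1) := by
    intro i m
    have hstep2 : ∀ k, tt i m + 1 + k ≤ φ' m + s + 1 →
        x i (tt i m + 1 + k) = x i (tt i m + 1) := by
      intro k
      induction k with
      | zero => intro _; rfl
      | succ k ih =>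
        intro hk
        have h2 : x i (tt i m + 1 + k + 1) = x i (tt i m + 1 + k) :=
          hskip i _ (hlast i m _ (by omega) (by omega))
        have he : tt i m + 1 + (k + 1) = tt i m + 1 + k + 1 := rfl
        rw [he, h2, ih (by omega)]
    have hub := httub i m
    obtain ⟨k, hk⟩ := Nat.exists_eq_add_of_le (show tt i m + 1 ≤ φ' m + s + 1 by omega)
    rw [hk, hstep2 k (by omega)]
  -- convergence of shifted sequences
  have hshift2 : ∀ (b : ℕ → ℕ) (c : ℕ), (∀ m, φ' m ≤ b m + s) → (∀ m, b m ≤ φ' m + c) →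
      Tendsto (fun m => X (b m)) atTop (𝓝 xstar) := by
    intro b c h1 h2
    have hev : ∀ᶠ m in atTop, s ≤ φ' m := hφ'top.eventually_ge_atTop s
    have hwtop : Tendsto (fun m => φ' m - s) atTop atTop := by
      rw [tendsto_atTop_atTop]
      intro n
      obtain ⟨N, hN⟩ := (tendsto_atTop_atTop.1 hφ'top) (n + s)
      exact ⟨N, fun m hm => by have := hN m hm; omega⟩
    have hA : Tendsto (fun m => ‖X (b m) - X (φ' m - s)‖) atTop (𝓝 0) := by
      refine hwin (s + c) _ _ hwtop ?_
      filter_upwards [hev] with m hm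
      have ha1 := h1 m; have ha2 := h2 m
      omega
    have hB : Tendsto (fun m => ‖X (φ' m) - X (φ' m - s)‖) atTop (𝓝 0) := by
      refine hwin s _ _ hwtop ?_
      filter_upwards [hev] with m hm
      omega
    have hC : Tendsto (fun m => ‖X (φ' m) - xstar‖) atTop (𝓝 0) :=
      tendsto_iff_norm_sub_tendsto_zero.1 hφ't
    rw [tendsto_iff_norm_sub_tendsto_zero]
    refine squeeze_zero (fun m => norm_nonneg _) (fun m => ?_)
      (by simpa using (hA.add hB).add hC)
    have t1 : ‖X (b m) - xstar‖ ≤ ‖X (b m) - X (φ' m - s)‖ + ‖X (φ' m - s) - xstar‖ :=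
      norm_sub_le_norm_sub_add_norm_sub _ _ _
    have t2 : ‖X (φ' m - s) - xstar‖ ≤ ‖X (φ' m - s) - X (φ' m)‖ + ‖X (φ' m) - xstar‖ :=
      norm_sub_le_norm_sub_add_norm_sub _ _ _
    have t3 : ‖X (φ' m - s) - X (φ' m)‖ = ‖X (φ' m) - X (φ' m - s)‖ := norm_sub_rev _ _
    linarith
  -- key eventual bound on the g-values
  have hkey : ∀ (i : Fin p) (ε : ℝ), 0 < ε →
      ∀ᶠ m in atTop, G i (φ' m + s + 1) ≤ r i + ε := by
    intro i ε hε
    have ht1 : Tendsto (fun m => x i (tt i m)) atTop (𝓝 (xstar i)) := by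
      have h := hcomp _ _ (hshift2 (fun m => tt i m) s
        (fun m => by have h := httlb i m; show φ' m ≤ tt i m + s; omega)
        (fun m => httub i m)) i
      exact h.congr fun m => by rw [hX]
    have ht2 : Tendsto (fun m => x i (tt i m + 1)) atTop (𝓝 (xstar i)) := by
      have h := hcomp _ _ (hshift2 (fun m => tt i m + 1) (s + 1)
        (fun m => by have h := httlb i m; show φ' m ≤ tt i m + 1 + s; omega)
        (fun m => by have h := httub i m; show tt i m + 1 ≤ φ' m + (s + 1); omega)) i
      exact h.congr fun m => by rw [hX]
    have ht3 : Tendsto (fun m => Xl i (tt i m)) atTop (𝓝 xstar) := by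
      rw [tendsto_iff_norm_sub_tendsto_zero]
      have hsq : Tendsto (fun m => ∑ j, ‖(Xl i (tt i m) - xstar) j‖ ^ 2) atTop (𝓝 0) := by
        have h0 : (0 : ℝ) = ∑ _j : Fin p, (0 : ℝ) := by simp
        rw [h0]
        refine tendsto_finset_sum _ fun j _ => ?_
        have hbj : Tendsto (fun m => x j (τ i j (tt i m))) atTop (𝓝 (xstar j)) := by
          have h := hcomp _ _ (hshift2 (fun m => τ i j (tt i m)) s
            (fun m => by
              have ha1 := httlb i m; have ha2 := hτ_ge i j (tt i m)
              show φ' m ≤ τ i j (tt i m) + s; omega)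
            (fun m => by
              have ha1 := httub i m; have ha2 := hτ_le i j (tt i m)
              show τ i j (tt i m) ≤ φ' m + s; omega)) j
          exact h.congr fun m => by rw [hX]
        have hz : Tendsto (fun m => x j (τ i j (tt i m)) - xstar j) atTop (𝓝 0) := by
          simpa using hbj.sub (tendsto_const_nhds (x := xstar j))
        have hn : Tendsto (fun m => ‖x j (τ i j (tt i m)) - xstar j‖ ^ 2) atTop (𝓝 0) := by
          have h := (hz.norm).pow 2
          simpa using h
        refine hn.congr fun m => ?_
        congr 2
        rw [show (Xl i (tt i m) - xstar) j = Xl i (tt i m) j - xstar j from rfl, hXl]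
      have h := (Real.continuous_sqrt.tendsto 0).comp hsq
      rw [Real.sqrt_zero] at h
      refine h.congr fun m => ?_
      show Real.sqrt (∑ j, ‖(Xl i (tt i m) - xstar) j‖ ^ 2) = ‖Xl i (tt i m) - xstar‖
      rw [← PiLp.norm_sq_eq_of_L2, Real.sqrt_sq (norm_nonneg _)]
    have hgradt : Tendsto (fun m => f' (Xl i (tt i m)) i) atTop (𝓝 (f' xstar i)) :=
      hcomp _ _ ((hf'c.tendsto xstar).comp ht3) i
    have hcm : Tendsto (fun m =>
        1 / (2 * η) * ‖x i (tt i m + 1) - (x i (tt i m) - η • f' (Xl i (tt i m)) i)‖ ^ 2)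
        atTop (𝓝 (1 / (2 * η) * ‖xstar i - (xstar i - η • f' xstar i)‖ ^ 2)) :=
      ((ht2.sub ((ht1.sub (hgradt.const_smul η)))).norm.pow 2).const_mul _
    have hcm' : Tendsto (fun m =>
        1 / (2 * η) * ‖xstar i - (x i (tt i m) - η • f' (Xl i (tt i m)) i)‖ ^ 2)
        atTop (𝓝 (1 / (2 * η) * ‖xstar i - (xstar i - η • f' xstar i)‖ ^ 2)) :=
      ((tendsto_const_nhds.sub ((ht1.sub (hgradt.const_smul η)))).norm.pow 2).const_mul _
    have hdiff : Tendsto (fun m =>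
        1 / (2 * η) * ‖xstar i - (x i (tt i m) - η • f' (Xl i (tt i m)) i)‖ ^ 2
        - 1 / (2 * η) * ‖x i (tt i m + 1) - (x i (tt i m) - η • f' (Xl i (tt i m)) i)‖ ^ 2)
        atTop (𝓝 0) := by
      simpa using hcm'.sub hcm
    filter_upwards [hdiff.eventually (gt_mem_nhds hε)] with m hm
    have hu := hupd i (tt i m) (httmem i m) (xstar i)
    rw [hgt i (tt i m + 1), hr i, ← EReal.coe_add, ← EReal.coe_add,
      EReal.coe_le_coe_iff] at hu
    have hGm : G i (φ' m + s + 1) = G i (tt i m + 1) := by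
      simp only [hGdef]
      rw [heq i m]
    rw [hGm]
    linarith
  -- Direction 2 : Fstar ≤ F xstar
  have hp0 : (0 : ℝ) < (p : ℝ) := by exact_mod_cast hp
  have hFstar_le : Fstar ≤ f xstar + ∑ i, r i := by
    refine le_of_forall_pos_le_add fun ε hε => ?_
    have hall : ∀ᶠ m in atTop, ∀ i : Fin p, G i (φ' m + s + 1) ≤ r i + ε / p :=
      eventually_all.2 fun i => hkey i (ε / p) (div_pos hε hp0)
    have hub : ∀ᶠ m in atTop,
        φ (φ' m + s + 1) ≤ f (X (φ' m + s + 1)) + ∑ i, (r i + ε / p) := by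
      filter_upwards [hall] with m hm
      have hs : ∑ i, G i (φ' m + s + 1) ≤ ∑ i, (r i + ε / p) :=
        Finset.sum_le_sum fun i _ => hm i
      simp only [hφdef]
      linarith
    have hL1 : Tendsto (fun m => φ (φ' m + s + 1)) atTop (𝓝 Fstar) :=
      htφ.comp (tendsto_atTop_mono (fun m => by omega) hφ'top)
    have hXu : Tendsto (fun m => X (φ' m + s + 1)) atTop (𝓝 xstar) :=
      hshift2 (fun m => φ' m + s + 1) (s + 1)
        (fun m => by show φ' m ≤ φ' m + s + 1 + s; omega)
        (fun m => by show φ' m + s + 1 ≤ φ' m + (s + 1); omega)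
    have hL2 : Tendsto (fun m => f (X (φ' m + s + 1)) + ∑ i, (r i + ε / p)) atTop
        (𝓝 (f xstar + ∑ i, (r i + ε / p))) :=
      (((hfc.tendsto xstar).comp hXu)).add tendsto_const_nhds
    have hle := le_of_tendsto_of_tendsto hL1 hL2 hub
    have hsum : ∑ i : Fin p, (r i + ε / p) = (∑ i, r i) + ε := by
      rw [Finset.sum_add_distrib, Finset.sum_const, Finset.card_univ, Fintype.card_fin,
        nsmul_eq_mul]
      field_simp
    rw [hsum] at hle
    linarith
  have hdir2 : ((Fstar : ℝ) : EReal) ≤ F xstar := by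
    rw [hFxstar]
    exact_mod_cast hFstar_le
  exact le_antisymm hdir1 hdir2
end

section
/- Let V be a real normed vector space, let s ≥ 1 be an integer, let r > 1, and set C = (r^{s+1} − 1)/(r − 1). Let y : ℕ → V be a sequence for which there exists T ∈ ℕ such that for all t ≥ T, Σ_{k=(t−s)_+}^{t} ‖y(k+1) − y(k)‖ ≥ C·‖y(t+1) − y(t)‖. Then the sequence has finite length: Σ_{t=0}^{∞} ‖y(t+1) − y(t)‖ < ∞. -/
open Filter Topology

theorem stmt_14
    (V : Type*) [NormedAddCommGroup V] [NormedSpace ℝ V]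
    (s : ℕ) (hs : 1 ≤ s) (r : ℝ) (hr : 1 < r)
    (C : ℝ) (hC : C = (r ^ (s + 1) - 1) / (r - 1))
    (y : ℕ → V) (T : ℕ)
    (hT : ∀ t : ℕ, T ≤ t →
      C * ‖y (t + 1) - y t‖ ≤ ∑ k ∈ Finset.Ico (t - s) (t + 1), ‖y (k + 1) - y k‖) :
    Summable (fun t => ‖y (t + 1) - y t‖) := by
  set a : ℕ → ℝ := fun t => ‖y (t + 1) - y t‖ with ha_def
  have ha : ∀ t, 0 ≤ a t := fun t => norm_nonneg _
  -- C is the geometric sum, hence > s + 1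
  have hCgeom : C = ∑ i ∈ Finset.range (s + 1), r ^ i := by
    rw [hC, geom_sum_eq (by linarith : r ≠ 1)]
  have hCgt : (s + 1 : ℝ) < C := by
    rw [hCgeom]
    calc (s + 1 : ℝ) = ∑ i ∈ Finset.range (s + 1), (1 : ℝ) := by simp
    _ < ∑ i ∈ Finset.range (s + 1), r ^ i := by
        apply Finset.sum_lt_sum
        · intro i _; exact one_le_pow₀ (le_of_lt hr)
        · exact ⟨1, Finset.mem_range.mpr (by omega), by simpa using hr⟩
  set B : ℝ := ∑ k ∈ Finset.Ico (T - s) T, a k with hB_def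
  have hB : 0 ≤ B := Finset.sum_nonneg fun k _ => ha k
  set D : ℝ := ((s : ℝ) + 1) * B / (C - ((s : ℝ) + 1)) with hD_def
  have hD : 0 ≤ D := div_nonneg (by positivity) (by linarith)
  set M : ℝ := ∑ k ∈ Finset.range T, a k with hM_def
  apply summable_of_sum_range_le (c := M + D) (fun n => ha n)
  intro n
  rcases le_total n T with hn | hn
  · have h1 : ∑ i ∈ Finset.range n, a i ≤ M :=
      Finset.sum_le_sum_of_subset_of_nonneg (Finset.range_subset_range.mpr hn)
        (fun k _ _ => ha k)
    linarith
  · -- split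
    have hsplit : ∑ i ∈ Finset.range n, a i = M + ∑ i ∈ Finset.Ico T n, a i := by
      rw [hM_def, Finset.range_eq_Ico, Finset.range_eq_Ico]
      exact (Finset.sum_Ico_consecutive a (Nat.zero_le T) hn).symm
    rw [hsplit]
    have hS : 0 ≤ ∑ i ∈ Finset.Ico T n, a i := Finset.sum_nonneg fun k _ => ha k
    -- key: C * S ≤ (s+1) * (B + S)
    have key : C * ∑ i ∈ Finset.Ico T n, a i ≤
        ((s : ℝ) + 1) * (B + ∑ i ∈ Finset.Ico T n, a i) := by
      have step1 : C * ∑ i ∈ Finset.Ico T n, a i ≤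
          ∑ t ∈ Finset.Ico T n, ∑ k ∈ Finset.Ico (t - s) (t + 1), a k := by
        rw [Finset.mul_sum]
        apply Finset.sum_le_sum
        intro t ht
        exact hT t (Finset.mem_Ico.mp ht).1
      have step2 : ∀ t ∈ Finset.Ico T n,
          ∑ k ∈ Finset.Ico (t - s) (t + 1), a k =
          ∑ k ∈ Finset.Ico (T - s) n, if k ∈ Finset.Ico (t - s) (t + 1) then a k else 0 := by
        intro t ht
        rw [Finset.sum_ite_mem]
        symm
        congr 1
        apply Finset.inter_eq_right.mpr
        intro k hk
        obtain ⟨hk1, hk2⟩ := Finset.mem_Ico.mp hk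
        obtain ⟨ht1, ht2⟩ := Finset.mem_Ico.mp ht
        exact Finset.mem_Ico.mpr ⟨le_trans (Nat.sub_le_sub_right ht1 s) hk1, by omega⟩
      have step3 : ∑ t ∈ Finset.Ico T n, ∑ k ∈ Finset.Ico (t - s) (t + 1), a k ≤
          ∑ k ∈ Finset.Ico (T - s) n, ((s : ℝ) + 1) * a k := by
        rw [Finset.sum_congr rfl step2, Finset.sum_comm]
        apply Finset.sum_le_sum
        intro k _
        rw [Finset.sum_ite, Finset.sum_const_zero, add_zero, Finset.sum_const,
          nsmul_eq_mul]
        have hcard : ((Finset.Ico T n).filter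
            (fun t => k ∈ Finset.Ico (t - s) (t + 1))).card ≤ s + 1 := by
          have hsub : (Finset.Ico T n).filter (fun t => k ∈ Finset.Ico (t - s) (t + 1))
              ⊆ Finset.Icc k (k + s) := by
            intro t ht
            simp only [Finset.mem_filter, Finset.mem_Ico] at ht
            exact Finset.mem_Icc.mpr ⟨by omega, by omega⟩
          calc _ ≤ (Finset.Icc k (k + s)).card := Finset.card_le_card hsub
          _ = s + 1 := by rw [Nat.card_Icc]; omega
        apply mul_le_mul_of_nonneg_right _ (ha k)
        exact_mod_cast hcard
      have step4 : ∑ k ∈ Finset.Ico (T - s) n, ((s : ℝ) + 1) * a k =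
          ((s : ℝ) + 1) * (B + ∑ i ∈ Finset.Ico T n, a i) := by
        rw [← Finset.mul_sum, hB_def,
          ← Finset.sum_Ico_consecutive a (Nat.sub_le T s) hn]
      linarith [le_trans step1 step3, step4.le, step4.ge]
    have hSle : ∑ i ∈ Finset.Ico T n, a i ≤ D := by
      rw [hD_def, le_div_iff₀ (by linarith : (0:ℝ) < C - ((s:ℝ) + 1))]
      nlinarith [key]
    linarith
end
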